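/- For every ε > 0 there exists a finite simple connected graph G such that mdim(G) / cdim(G) ≤ ε. Concretely, the path graph P_n on n vertices satisfies mdim(P_n) = 1 and cdim(P_n) = n − 1. -/

import Mathlib

open SimpleGraph

namespace ConnDim

open Classical in
/-- The local connectivity `κ(a,b)`: the maximum number of internally vertex-disjoint
`a`-`b` paths, with `κ(a,a) = ∞`. -/
noncomputable def localConn {V : Type*} (G : SimpleGraph V) (a b : V) : ℕ∞ :=
  if a = b then ⊤
  else sSup {n : ℕ∞ | ∃ Ps : Finset (G.Path a b),
    (∀ p ∈ Ps, ∀ q ∈ Ps, p ≠ q → ∀ x : V,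
        x ∈ p.1.support → x ∈ q.1.support → x = a ∨ x = b) ∧
    (Ps.card : ℕ∞) = n}

/-- A set `W` is connectivity resolving if vertices are determined by their
local connectivities to the elements of `W`. -/
def ConnResolving {V : Type*} (G : SimpleGraph V) (W : Set V) : Prop :=
  ∀ u v : V, (∀ w ∈ W, localConn G u w = localConn G v w) → u = v

/-- The connectivity dimension: minimum cardinality of a connectivity resolving set. -/
noncomputable def cdim {V : Type*} (G : SimpleGraph V) : ℕ :=
  sInf {n : ℕ | ∃ W : Set V, ConnResolving G W ∧ W.ncard = n}

/-- A set `W` is metric resolving if vertices are determined by their distances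
to the elements of `W`. -/
def MetricResolving {V : Type*} (G : SimpleGraph V) (W : Set V) : Prop :=
  ∀ u v : V, (∀ w ∈ W, G.dist u w = G.dist v w) → u = v

/-- The metric dimension: minimum cardinality of a metric resolving set. -/
noncomputable def mdim {V : Type*} (G : SimpleGraph V) : ℕ :=
  sInf {n : ℕ | ∃ W : Set V, MetricResolving G W ∧ W.ncard = n}

/-- `G` forces a `𝟙` representation if every minimum resolving set (basis) `B` admits a
vertex whose local connectivity to every element of `B` equals `1`. -/
def ForcesOne {V : Type*} (G : SimpleGraph V) : Prop :=
  ∀ B : Set V, ConnResolving G B → B.ncard = cdim G →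
    ∃ v : V, ∀ b ∈ B, localConn G v b = 1

/-- A cut vertex of a connected graph: its removal disconnects the graph. -/
def IsCutVertex {V : Type*} (G : SimpleGraph V) (v : V) : Prop :=
  G.Connected ∧ ¬ (G.induce {u : V | u ≠ v}).Connected

/-- A block of `G`: a maximal connected subgraph of `G` without a cut vertex of itself. -/
def IsBlock {V : Type*} (G : SimpleGraph V) (H : G.Subgraph) : Prop :=
  H.coe.Connected ∧ (∀ v, ¬ IsCutVertex H.coe v) ∧
  ∀ H' : G.Subgraph, H ≤ H' → H'.coe.Connected → (∀ v, ¬ IsCutVertex H'.coe v) → H' = H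

/-- The number of blocks of `G`. -/
noncomputable def numBlocks {V : Type*} (G : SimpleGraph V) : ℕ :=
  Nat.card {H : G.Subgraph // IsBlock G H}

/-- Two vertices are twins if they have the same neighborhood in the graph with
both of them deleted. -/
def AreTwins {V : Type*} (G : SimpleGraph V) (a b : V) : Prop :=
  ∀ x : V, x ≠ a → x ≠ b → (G.Adj a x ↔ G.Adj b x)

/-- The threshold graph generated by a binary sequence `L` (`false` = isolated vertex,
`true` = dominating vertex): two vertices are adjacent iff the later one was added
as a dominating vertex. -/
def thresholdGraph (L : List Bool) : SimpleGraph (Fin L.length) :=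
  SimpleGraph.fromRel (fun i j => i < j ∧ L.get j = true)

/-- The alternating binary sequence `0,1,0,1,…,0,1` of length `2 * n`. -/
def altList (n : ℕ) : List Bool := (List.replicate n [false, true]).flatten

/-- The join of two graphs on disjoint vertex sets by the bridge `v₁v₂`. -/
def bridgeJoin {V₁ V₂ : Type*} (G₁ : SimpleGraph V₁) (G₂ : SimpleGraph V₂)
    (v₁ : V₁) (v₂ : V₂) : SimpleGraph (V₁ ⊕ V₂) :=
  G₁.map Function.Embedding.inl ⊔ G₂.map Function.Embedding.inr
    ⊔ SimpleGraph.fromEdgeSet {s(Sum.inl v₁, Sum.inr v₂)}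

/-- The graph obtained from `G` by attaching a new leaf (the vertex `none`) to `u`. -/
def attachLeaf {V : Type*} (G : SimpleGraph V) (u : V) : SimpleGraph (Option V) :=
  G.map Function.Embedding.some ⊔ SimpleGraph.fromEdgeSet {s(some u, (none : Option V))}

/-- The chain of `t` triangles (triangle `i` has vertices `inl i.castSucc`, `inl i.succ`,
`inr (inl i)`), with a leaf `inr (inr ())` attached to the end vertex `inl 0`. -/
def triChain (t : ℕ) : SimpleGraph (Fin (t+1) ⊕ Fin t ⊕ Unit) :=
  SimpleGraph.fromRel (fun a b =>
    match a, b with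
    | Sum.inl i, Sum.inl j => (i : ℕ) + 1 = (j : ℕ)
    | Sum.inr (Sum.inl i), Sum.inl j => j = Fin.castSucc i ∨ j = Fin.succ i
    | Sum.inr (Sum.inr _), Sum.inl j => j = 0
    | _, _ => False)


variable {n : ℕ}

lemma mem_support_up {a b m : Fin n} (p : (pathGraph n).Walk a b)
    (h1 : a ≤ m) (h2 : m ≤ b) : m ∈ p.support := by
  induction p with
  | nil => simpa using le_antisymm h2 h1
  | @cons a c b h q ih =>
    rcases eq_or_lt_of_le h1 with rfl | hlt
    · simp
    · rw [Walk.support_cons]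
      refine List.mem_cons_of_mem _ (ih ?_ h2)
      rw [pathGraph_adj] at h
      have hm : (a : ℕ) < (m : ℕ) := hlt
      rcases h with h | h <;> (rw [Fin.le_def]; omega)

lemma mem_support_down {a b m : Fin n} (p : (pathGraph n).Walk a b)
    (h1 : b ≤ m) (h2 : m ≤ a) : m ∈ p.support := by
  have := mem_support_up p.reverse h1 h2
  rwa [Walk.support_reverse, List.mem_reverse] at this

lemma walk_isPath_unique {b : Fin n} :
    ∀ {a : Fin n} (p q : (pathGraph n).Walk a b), p.IsPath → q.IsPath → p = q := by
  intro a p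
  induction p with
  | nil =>
    intro q _ hq
    exact (Walk.isPath_iff_eq_nil.mp hq).symm
  | @cons a c b h p ih =>
    intro q hp hq
    have hpnot : a ∉ p.support := ((Walk.cons_isPath_iff h p).mp hp).2
    have hab : a ≠ b := by
      rintro rfl
      exact hpnot (Walk.end_mem_support p)
    cases q with
    | nil => exact absurd rfl hab
    | @cons _ c' _ h' q' =>
      have hqnot : a ∉ q'.support := ((Walk.cons_isPath_iff h' q').mp hq).2
      have hc : c = c' := by
        rw [pathGraph_adj] at h h'
        have hval : (c : ℕ) = (c' : ℕ) := by
          rcases h with h | h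
          · rcases h' with h' | h'
            · omega
            · -- c = a+1, a = c'+1
              exfalso
              rcases lt_or_gt_of_ne hab with hab' | hab'
              · -- a < b, second walk q' : Walk c' b with c' < a ≤ b
                exact hqnot (mem_support_up q' (by rw [Fin.le_def]; omega)
                  (le_of_lt hab'))
              · -- b < a ≤ c, first walk p : Walk c b contains a
                exact hpnot (mem_support_down p (le_of_lt hab')
                  (by rw [Fin.le_def]; omega))
          · rcases h' with h' | h'
            · exfalso
              rcases lt_or_gt_of_ne hab with hab' | hab'
              · exact hpnot (mem_support_up p (by rw [Fin.le_def]; omega)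
                  (le_of_lt hab'))
              · exact hqnot (mem_support_down q' (le_of_lt hab')
                  (by rw [Fin.le_def]; omega))
            · omega
        exact Fin.ext hval
      subst hc
      rw [ih q' hp.of_cons hq.of_cons]


lemma path_unique {a b : Fin n} (p q : (pathGraph n).Path a b) : p = q :=
  Subtype.ext (walk_isPath_unique p.1 q.1 p.2 q.2)

lemma pathGraph_connected' (hn : 2 ≤ n) : (pathGraph n).Connected := by
  obtain ⟨m, rfl⟩ : ∃ m, n = m + 1 := ⟨n - 1, by omega⟩
  exact pathGraph_connected m

lemma localConn_self {V : Type*} (G : SimpleGraph V) (a : V) :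
    localConn G a a = ⊤ := if_pos rfl

lemma localConn_pathGraph (hn : 2 ≤ n) {a b : Fin n} (hab : a ≠ b) :
    localConn (pathGraph n) a b = 1 := by
  classical
  rw [localConn, if_neg hab]
  have hreach : (pathGraph n).Reachable a b := (pathGraph_connected' hn) a b
  obtain ⟨w⟩ := hreach
  set p₀ : (pathGraph n).Path a b := w.toPath with hp₀
  apply le_antisymm
  · apply sSup_le
    rintro x ⟨Ps, -, rfl⟩
    have hcard : Ps.card ≤ 1 := Finset.card_le_one.mpr (fun p _ q _ => path_unique p q)
    exact_mod_cast hcard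
  · apply le_sSup
    refine ⟨{p₀}, ?_, by simp⟩
    intro p hp q hq hpq
    exact absurd (path_unique p q) hpq

lemma connResolving_of_compl_singleton (hn : 2 ≤ n) (x₀ : Fin n) :
    ConnResolving (pathGraph n) {x | x ≠ x₀} := by
  intro u v h
  by_contra huv
  by_cases hu : u = x₀
  · have hv : v ≠ x₀ := fun hv => huv (hv ▸ hu)
    have := h v hv
    rw [localConn_self, localConn_pathGraph hn huv] at this
    simp at this
  · have := h u hu
    rw [localConn_self, localConn_pathGraph hn (Ne.symm huv)] at this
    exact (by simp : (1 : ℕ∞) ≠ ⊤) this.symm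

lemma cdim_pathGraph (hn : 2 ≤ n) : cdim (pathGraph n) = n - 1 := by
  classical
  have hmem : n - 1 ∈ {k | ∃ W : Set (Fin n), ConnResolving (pathGraph n) W ∧ W.ncard = k} := by
    refine ⟨{x | x ≠ (⟨0, by omega⟩ : Fin n)},
      connResolving_of_compl_singleton hn ⟨0, by omega⟩, ?_⟩
    have he : ({x | x ≠ (⟨0, by omega⟩ : Fin n)} : Set (Fin n)) =
        {(⟨0, by omega⟩ : Fin n)}ᶜ := by ext x; simp
    rw [he]
    have hc := Set.ncard_add_ncard_compl ({(⟨0, by omega⟩ : Fin n)} : Set (Fin n))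
    rw [Set.ncard_singleton] at hc
    have hV : Nat.card (Fin n) = n := by simp
    omega
  have hlb : ∀ k ∈ {k | ∃ W : Set (Fin n), ConnResolving (pathGraph n) W ∧ W.ncard = k},
      n - 1 ≤ k := by
    rintro k ⟨W, hW, rfl⟩
    by_contra hk
    push_neg at hk
    have hcompl : 1 < Wᶜ.ncard := by
      have hc := Set.ncard_add_ncard_compl W
      
      have hV : Nat.card (Fin n) = n := by simp
      omega
    obtain ⟨u, v, hu, hv, huv⟩ := (Set.one_lt_ncard_iff Wᶜ.toFinite).mp hcompl
    refine huv (hW u v fun w hw => ?_)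
    have hwu : u ≠ w := fun h => hu (h ▸ hw)
    have hwv : v ≠ w := fun h => hv (h ▸ hw)
    rw [localConn_pathGraph hn hwu, localConn_pathGraph hn hwv]
  exact le_antisymm (Nat.sInf_le hmem) (le_csInf ⟨_, hmem⟩ hlb)

lemma nat_dist_le_walk_length {a b : Fin n} (p : (pathGraph n).Walk a b) :
    Nat.dist (a : ℕ) (b : ℕ) ≤ p.length := by
  induction p with
  | nil => simp [Nat.dist_self]
  | @cons a c b h q ih =>
    rw [Walk.length_cons]
    have h1 : Nat.dist (a : ℕ) (c : ℕ) = 1 := by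
      rw [pathGraph_adj] at h
      rcases h with h | h <;> simp [Nat.dist] <;> omega
    calc Nat.dist (a : ℕ) (b : ℕ) ≤ Nat.dist (a : ℕ) (c : ℕ) + Nat.dist (c : ℕ) (b : ℕ) :=
          Nat.dist.triangle_inequality _ _ _
      _ ≤ 1 + q.length := by rw [h1]; omega
      _ = q.length + 1 := by omega

lemma dist_pathGraph_zero (hn : 2 ≤ n) (u : Fin n) :
    (pathGraph n).dist u ⟨0, by omega⟩ = (u : ℕ) := by
  have hcon := pathGraph_connected' hn
  apply le_antisymm
  · -- construct a walk of length u.val by downward induction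
    clear hcon
    obtain ⟨k, hk⟩ := u
    induction k with
    | zero => simp [SimpleGraph.dist_self]
    | succ m ih =>
      have hadj : (pathGraph n).Adj ⟨m + 1, hk⟩ ⟨m, by omega⟩ := by
        rw [pathGraph_adj]; right; simp
      calc (pathGraph n).dist ⟨m + 1, hk⟩ ⟨0, by omega⟩
          ≤ (pathGraph n).dist ⟨m + 1, hk⟩ ⟨m, by omega⟩ +
            (pathGraph n).dist ⟨m, by omega⟩ ⟨0, by omega⟩ :=
            (pathGraph_connected' hn).dist_triangle
        _ ≤ 1 + m := by
            have h1 : (pathGraph n).dist ⟨m + 1, hk⟩ ⟨m, by omega⟩ ≤ 1 := by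
              simpa using SimpleGraph.dist_le hadj.toWalk
            have h2 : (pathGraph n).dist ⟨m, by omega⟩ ⟨0, by omega⟩ ≤ m := by
              simpa using ih (by omega)
            omega
        _ = ((⟨m + 1, hk⟩ : Fin n) : ℕ) := by simp [Nat.add_comm]
  · obtain ⟨p, hp⟩ := (hcon ⟨0, by omega⟩ u).symm.exists_walk_length_eq_dist
    have := nat_dist_le_walk_length p
    rw [hp] at this
    simpa [Nat.dist_zero_right] using this

lemma mdim_pathGraph (hn : 2 ≤ n) : mdim (pathGraph n) = 1 := by
  classical
  set S := {k | ∃ W : Set (Fin n), MetricResolving (pathGraph n) W ∧ W.ncard = k} with hS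
  have h1 : 1 ∈ S := by
    refine ⟨{⟨0, by omega⟩}, ?_, Set.ncard_singleton _⟩
    intro u v h
    have := h ⟨0, by omega⟩ rfl
    rw [dist_pathGraph_zero hn, dist_pathGraph_zero hn] at this
    exact Fin.ext this
  have h0 : 0 ∉ S := by
    rintro ⟨W, hW, hcard⟩
    rw [Set.ncard_eq_zero W.toFinite] at hcard
    subst hcard
    have : (⟨0, by omega⟩ : Fin n) = ⟨1, by omega⟩ := hW _ _ (by rintro w ⟨⟩)
    simp at this
  have : mdim (pathGraph n) ∈ S := Nat.sInf_mem ⟨1, h1⟩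
  have hne : mdim (pathGraph n) ≠ 0 := fun h => h0 (h ▸ this)
  have hle : mdim (pathGraph n) ≤ 1 := Nat.sInf_le h1
  omega

/-- for every `ε > 0` there is a connected graph `G` with
`mdim G / cdim G ≤ ε`; concretely the path graph `P_n` has metric dimension `1` and
connectivity dimension `n - 1`. -/
theorem stmt9 :
    (∀ n : ℕ, 2 ≤ n →
      mdim (pathGraph n) = 1 ∧ cdim (pathGraph n) = n - 1) ∧
    (∀ ε : ℝ, 0 < ε → ∃ n : ℕ, 2 ≤ n ∧ (pathGraph n).Connected ∧
      (mdim (pathGraph n) : ℝ) / (cdim (pathGraph n) : ℝ) ≤ ε) := by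
  constructor
  · intro n hn
    exact ⟨mdim_pathGraph hn, cdim_pathGraph hn⟩
  · intro ε hε
    set n : ℕ := ⌈1 / ε⌉₊ + 2 with hn
    have h2n : 2 ≤ n := by omega
    refine ⟨n, h2n, pathGraph_connected' h2n, ?_⟩
    rw [mdim_pathGraph h2n, cdim_pathGraph h2n]
    have hkey : 1 / ε ≤ ((n - 1 : ℕ) : ℝ) := by
      have h1 : 1 / ε ≤ (⌈1 / ε⌉₊ : ℝ) := Nat.le_ceil _
      have h2 : (⌈1 / ε⌉₊ : ℝ) ≤ ((n - 1 : ℕ) : ℝ) := by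
        have : ⌈1 / ε⌉₊ ≤ n - 1 := by omega
        exact_mod_cast this
      linarith
    have hpos : (0 : ℝ) < ((n - 1 : ℕ) : ℝ) := by
      have : 1 ≤ n - 1 := by omega
      exact_mod_cast Nat.lt_of_lt_of_le Nat.zero_lt_one this
    rw [Nat.cast_one, div_le_iff₀ hpos]
    have h3 : 1 ≤ ((n - 1 : ℕ) : ℝ) * ε := (div_le_iff₀ hε).mp hkey
    nlinarith

end ConnDim
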